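/- Let F be a finite field with q elements, let G = SL(3,F), and let X be the G-set of complete flags in F³. Then the dimension over ℂ of the endomorphism algebra End_{Rep ℂ G}(ℂ[X]) of the permutation representation ℂ[X] equals 6. (This endomorphism algebra is the A₂ Iwahori–Hecke algebra 𝓗(A₂,q), whose dimension is the order of the Coxeter group S₃.) -/

import Mathlib

/-- A complete flag in `F³`: a pair of subspaces `V₁ ≤ V₂` with `dim V₁ = 1` and
`dim V₂ = 2`. -/
def CompleteFlag (F : Type) [Field F] : Type :=
  {V : Submodule F (Fin 3 → F) × Submodule F (Fin 3 → F) //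
    Module.finrank F V.1 = 1 ∧ Module.finrank F V.2 = 2 ∧ V.1 ≤ V.2}

/-- `SL(3,F)` acts on complete flags in `F³` by taking images of subspaces. -/
noncomputable instance completeFlagAction (F : Type) [Field F] :
    MulAction (Matrix.SpecialLinearGroup (Fin 3) F) (CompleteFlag F) where
  smul g V := ⟨(V.1.1.map (Matrix.SpecialLinearGroup.toLin' g).toLinearMap,
                V.1.2.map (Matrix.SpecialLinearGroup.toLin' g).toLinearMap),
      by rw [LinearEquiv.finrank_map_eq]; exact V.2.1,
      by rw [LinearEquiv.finrank_map_eq]; exact V.2.2.1,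
      Submodule.map_mono V.2.2.2⟩
  one_smul V := by
    apply Subtype.ext
    show (Submodule.map _ _, Submodule.map _ _) = _
    rw [map_one]
    simp [LinearEquiv.coe_toLinearMap_one, Submodule.map_id]
  mul_smul g h V := by
    apply Subtype.ext
    show (Submodule.map _ _, Submodule.map _ _) = (Submodule.map _ _, Submodule.map _ _)
    rw [map_mul]
    exact Prod.ext
      (by simp only [LinearEquiv.coe_toLinearMap_mul, Module.End.mul_eq_comp, Submodule.map_comp]; rfl)
      (by simp only [LinearEquiv.coe_toLinearMap_mul, Module.End.mul_eq_comp, Submodule.map_comp]; rfl)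



section PermRepHom

open Finsupp

variable {G X : Type} [Group G] [MulAction G X] [Fintype X]

noncomputable def homFun (f : Rep.ofMulAction ℂ G X ⟶ Rep.ofMulAction ℂ G X) :
    (X →₀ ℂ) →ₗ[ℂ] (X →₀ ℂ) := (MonoidAlgebra.coeffLinearEquiv ℂ (S := ℂ) (M := X)).toLinearMap ∘ₗ f.hom.toLinearMap ∘ₗ (MonoidAlgebra.coeffLinearEquiv ℂ (S := ℂ) (M := X)).symm.toLinearMap

noncomputable def entry (f : Rep.ofMulAction ℂ G X ⟶ Rep.ofMulAction ℂ G X)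
    (p : X × X) : ℂ := homFun f (Finsupp.single p.2 1) p.1

theorem entry_smul (f : Rep.ofMulAction ℂ G X ⟶ Rep.ofMulAction ℂ G X) (g : G) (p : X × X) :
    entry f (g • p) = entry f p := by
  obtain ⟨x, y⟩ := p
  show homFun f (Finsupp.single (g • y) 1) (g • x) = _
  have h1 : (Finsupp.single (g • y) (1:ℂ)) = (Finsupp.lmapDomain ℂ ℂ (fun z : X => g • z)) (Finsupp.single y (1:ℂ)) :=
    (Finsupp.mapDomain_single).symm
  have hc : ∀ v : X →₀ ℂ, homFun f ((Finsupp.lmapDomain ℂ ℂ (fun z : X => g • z)) v)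
      = (Finsupp.lmapDomain ℂ ℂ (fun z : X => g • z)) (homFun f v) := fun v => congrArg (MonoidAlgebra.coeffLinearEquiv ℂ (S := ℂ) (M := X)) (Rep.hom_comm_apply f g ((MonoidAlgebra.coeffLinearEquiv ℂ (S := ℂ) (M := X)).symm v))
  rw [h1, hc]
  show (Finsupp.mapDomain (fun z => g • z) (homFun f (Finsupp.single y 1))) (g • x) = _
  rw [Finsupp.mapDomain_apply (MulAction.injective g)]
  rfl


noncomputable def col (c : Quotient (MulAction.orbitRel G (X × X)) → ℂ) (y : X) : X →₀ ℂ :=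
  Finsupp.equivFunOnFinite.symm (fun x => c ⟦(x, y)⟧)

noncomputable def matLin (c : Quotient (MulAction.orbitRel G (X × X)) → ℂ) :
    (X →₀ ℂ) →ₗ[ℂ] (X →₀ ℂ) :=
  Finsupp.lsum ℂ (fun y => LinearMap.toSpanSingleton ℂ (X →₀ ℂ) (col c y))

theorem matLin_comm (c : Quotient (MulAction.orbitRel G (X × X)) → ℂ) (g : G) :
    (matLin c).comp (Finsupp.lmapDomain ℂ ℂ (fun z : X => g • z)) = (Finsupp.lmapDomain ℂ ℂ (fun z : X => g • z)).comp (matLin c) := by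
  refine Finsupp.lhom_ext' (fun y => LinearMap.ext_ring ?_)
  show matLin c ((Finsupp.lmapDomain ℂ ℂ (fun z : X => g • z)) (Finsupp.single y 1))
    = (Finsupp.lmapDomain ℂ ℂ (fun z : X => g • z)) (matLin c (Finsupp.single y 1))
  have h1 : ((Finsupp.lmapDomain ℂ ℂ (fun z : X => g • z)) (Finsupp.single y (1:ℂ))) = Finsupp.single (g • y) 1 :=
    Finsupp.mapDomain_single
  rw [h1]
  show (Finsupp.lsum ℂ fun y => LinearMap.toSpanSingleton ℂ (X →₀ ℂ) (col c y)) _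
    = (Finsupp.lmapDomain ℂ ℂ (fun z : X => g • z)) ((Finsupp.lsum ℂ fun y => LinearMap.toSpanSingleton ℂ (X →₀ ℂ) (col c y)) _)
  rw [Finsupp.lsum_single, Finsupp.lsum_single, LinearMap.toSpanSingleton_apply_one, LinearMap.toSpanSingleton_apply_one]
  ext x
  show col c (g • y) x = Finsupp.mapDomain (fun z => g • z) (col c y) x
  have hx : x = g • (g⁻¹ • x) := (smul_inv_smul g x).symm
  rw [hx, Finsupp.mapDomain_apply (MulAction.injective g)]
  show c ⟦(g • g⁻¹ • x, g • y)⟧ = c ⟦(g⁻¹ • x, y)⟧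
  congr 1
  exact Quotient.sound ⟨g, rfl⟩

noncomputable def matHom (c : Quotient (MulAction.orbitRel G (X × X)) → ℂ) :
    Rep.ofMulAction ℂ G X ⟶ Rep.ofMulAction ℂ G X :=
  Rep.ofHom ⟨(MonoidAlgebra.coeffLinearEquiv ℂ (S := ℂ) (M := X)).symm.toLinearMap ∘ₗ matLin c ∘ₗ (MonoidAlgebra.coeffLinearEquiv ℂ (S := ℂ) (M := X)).toLinearMap, fun g => LinearMap.ext fun w =>
    congrArg (MonoidAlgebra.coeffLinearEquiv ℂ (S := ℂ) (M := X)).symm (LinearMap.congr_fun (matLin_comm c g) ((MonoidAlgebra.coeffLinearEquiv ℂ (S := ℂ) (M := X)) w))⟩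

noncomputable def homLequiv :
    (Rep.ofMulAction ℂ G X ⟶ Rep.ofMulAction ℂ G X) ≃ₗ[ℂ]
      (Quotient (MulAction.orbitRel G (X × X)) → ℂ) where
  toFun f := Quotient.lift (entry f) (by
    rintro p q ⟨g, rfl⟩
    exact entry_smul f g q)
  map_add' f f' := by
    funext q
    induction q using Quotient.inductionOn with
    | h p =>
      show entry (f + f') p = entry f p + entry f' p
      show homFun (f + f') (Finsupp.single p.2 1) p.1 = _
      have : homFun (f + f') = homFun f + homFun f' := by
        simp only [homFun, Rep.add_hom, Representation.IntertwiningMap.add_toLinearMap,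
          LinearMap.add_comp, LinearMap.comp_add]
      rw [this]
      rfl
  map_smul' t f := by
    funext q
    induction q using Quotient.inductionOn with
    | h p =>
      show entry (t • f) p = t * entry f p
      show homFun (t • f) (Finsupp.single p.2 1) p.1 = _
      have : homFun (t • f) = t • homFun f := by
        simp only [homFun, Rep.smul_hom, Representation.IntertwiningMap.toLinearMap_smul,
          LinearMap.smul_comp, LinearMap.comp_smul]
      rw [this]
      rfl
  invFun c := matHom c
  left_inv f := by
    apply Rep.hom_ext
    apply Representation.IntertwiningMap.ext
    suffices h : matLin (Quotient.lift (entry f) (by rintro p q ⟨g, rfl⟩; exact entry_smul f g q))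
        = (homFun f : (X →₀ ℂ) →ₗ[ℂ] (X →₀ ℂ)) by
      refine LinearMap.ext fun w => ?_
      show (MonoidAlgebra.coeffLinearEquiv ℂ (S := ℂ) (M := X)).symm (matLin _ ((MonoidAlgebra.coeffLinearEquiv ℂ (S := ℂ) (M := X)) w)) = f.hom w
      rw [h]
      rfl
    refine Finsupp.lhom_ext' (fun y => LinearMap.ext_ring ?_)
    show matLin _ (Finsupp.single y 1) = homFun f (Finsupp.single y 1)
    show (Finsupp.lsum ℂ fun y' => LinearMap.toSpanSingleton ℂ (X →₀ ℂ) (col _ y')) _ = _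
    rw [Finsupp.lsum_single, LinearMap.toSpanSingleton_apply_one]
    ext x
    show entry f (x, y) = _
    rfl
  right_inv c := by
    funext q
    induction q using Quotient.inductionOn with
    | h p =>
      show entry (matHom c) p = c ⟦p⟧
      show (matLin c) (Finsupp.single p.2 1) p.1 = _
      show (Finsupp.lsum ℂ fun y' => LinearMap.toSpanSingleton ℂ (X →₀ ℂ) (col c y')) _ p.1 = _
      rw [Finsupp.lsum_single, LinearMap.toSpanSingleton_apply_one]
      rfl

theorem finrank_hom_eq_card :
    Module.finrank ℂ (Rep.ofMulAction ℂ G X ⟶ Rep.ofMulAction ℂ G X)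
      = Nat.card (Quotient (MulAction.orbitRel G (X × X))) := by
  have : Finite (Quotient (MulAction.orbitRel G (X × X))) := Quotient.finite _
  have := Fintype.ofFinite (Quotient (MulAction.orbitRel G (X × X)))
  rw [(homLequiv (G := G) (X := X)).finrank_eq]
  rw [Module.finrank_fintype_fun_eq_card, Nat.card_eq_fintype_card]

end PermRepHom

open Submodule Module

variable {F : Type} [Field F]

-- basic lemmas about triples
theorem li_pair_of_li {M : Type*} [AddCommGroup M] [Module F M] {v : Fin 3 → M}
    (hv : LinearIndependent F v) {i j : Fin 3} (hij : i ≠ j) :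
    LinearIndependent F ![v i, v j] := by
  have h : ![v i, v j] = v ∘ ![i, j] := by
    funext k; fin_cases k <;> rfl
  rw [h]
  apply hv.comp
  intro a b hab
  fin_cases a <;> fin_cases b <;> simp_all <;> exact absurd hab hij <;> exact absurd hab.symm hij

theorem finrank_span_pair {M : Type*} [AddCommGroup M] [Module F M] {x y : M}
    (h : LinearIndependent F ![x, y]) : finrank F (span F ({x, y} : Set M)) = 2 := by
  have h2 : Set.range ![x, y] = {x, y} := by
    simp [Matrix.range_cons, Matrix.range_empty, Set.pair_comm]
  have := finrank_span_eq_card h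
  rw [h2] at this
  simpa using this

theorem basis_mem_span_single {M : Type*} [AddCommGroup M] [Module F M]
    (b : Basis (Fin 3) F M) {i j : Fin 3} : b j ∈ span F ({b i} : Set M) ↔ j = i := by
  have h : ({b i} : Set M) = b '' {i} := by simp
  rw [h, Basis.mem_span_image, Basis.repr_self]
  simp [Finsupp.support_single_ne_zero]

theorem basis_mem_span_pair {M : Type*} [AddCommGroup M] [Module F M]
    (b : Basis (Fin 3) F M) {i j k : Fin 3} :
    b j ∈ span F ({b i, b k} : Set M) ↔ j = i ∨ j = k := by
  have h : ({b i, b k} : Set M) = b '' {i, k} := by simp [Set.image_pair]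
  rw [h, Basis.mem_span_image, Basis.repr_self]
  simp [Finsupp.support_single_ne_zero]

theorem span_pair_le_iff {M : Type*} [AddCommGroup M] [Module F M] {x y : M} {W : Submodule F M} :
    span F ({x, y} : Set M) ≤ W ↔ x ∈ W ∧ y ∈ W := by
  rw [span_le, Set.insert_subset_iff, Set.singleton_subset_iff]
  simp

/-- auxiliary function computing the relative position -/
def posAux (a b c d : Prop) [Decidable a] [Decidable b] [Decidable c] [Decidable d] : Fin 6 :=
  if a ∧ b then 0 else if b then 1 else if a then 2 else if c then 3 else if d then 4 else 5

theorem posAux_congr {a b c d a' b' c' d' : Prop}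
    [Decidable a] [Decidable b] [Decidable c] [Decidable d]
    [Decidable a'] [Decidable b'] [Decidable c'] [Decidable d']
    (ha : a ↔ a') (hb : b ↔ b') (hc : c ↔ c') (hd : d ↔ d') :
    posAux a b c d = posAux a' b' c' d' :=
  if_congr (and_congr ha hb) rfl
    (if_congr hb rfl (if_congr ha rfl (if_congr hc rfl (if_congr hd rfl rfl))))

open Classical in
/-- The relative position of two flags. -/
noncomputable def pos (p : CompleteFlag F × CompleteFlag F) : Fin 6 :=
  posAux (p.1.1.1 = p.2.1.1) (p.1.1.2 = p.2.1.2) (p.1.1.1 ≤ p.2.1.2) (p.2.1.1 ≤ p.1.1.2)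

/-- standard-ish flag from a basis -/
noncomputable def flB (b : Basis (Fin 3) F (Fin 3 → F)) (i j : Fin 3) (hij : i ≠ j) :
    CompleteFlag F :=
  ⟨(span F {b i}, span F ({b i, b j} : Set (Fin 3 → F))),
   finrank_span_singleton (b.ne_zero i),
   finrank_span_pair (li_pair_of_li b.linearIndependent hij),
   span_mono (by simp)⟩

theorem flB_fst (b : Basis (Fin 3) F (Fin 3 → F)) (i j : Fin 3) (hij : i ≠ j) :
    (flB b i j hij).1.1 = span F {b i} := rfl

theorem span_single_eq_iff (b : Basis (Fin 3) F (Fin 3 → F)) {i j : Fin 3} :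
    span F ({b i} : Set (Fin 3 → F)) = span F ({b j} : Set (Fin 3 → F)) ↔ i = j := by
  constructor
  · intro h
    have : b i ∈ span F ({b j} : Set (Fin 3 → F)) := h ▸ mem_span_singleton_self _
    exact (basis_mem_span_single b).1 this
  · rintro rfl; rfl

theorem span_single_le_pair_iff (b : Basis (Fin 3) F (Fin 3 → F)) {i j k : Fin 3} :
    span F ({b i} : Set (Fin 3 → F)) ≤ span F ({b j, b k} : Set (Fin 3 → F)) ↔ i = j ∨ i = k := by
  rw [span_singleton_le_iff_mem, basis_mem_span_pair]

theorem span_pair_eq_iff (b : Basis (Fin 3) F (Fin 3 → F)) {i j k l : Fin 3} :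
    span F ({b i, b j} : Set (Fin 3 → F)) = span F ({b k, b l} : Set (Fin 3 → F)) ↔
      ((i = k ∨ i = l) ∧ (j = k ∨ j = l)) ∧ ((k = i ∨ k = j) ∧ (l = i ∨ l = j)) := by
  rw [le_antisymm_iff, span_pair_le_iff, span_pair_le_iff,
    basis_mem_span_pair, basis_mem_span_pair, basis_mem_span_pair, basis_mem_span_pair]

/-- index patterns -/
def w1 : Fin 6 → Fin 3 := ![2, 1, 2, 0, 1, 0]
def w2 : Fin 6 → Fin 3 := ![1, 2, 0, 2, 0, 1]

theorem w_ne (k : Fin 6) : w1 k ≠ w2 k := by fin_cases k <;> decide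

theorem pos_pattern (b : Basis (Fin 3) F (Fin 3 → F)) (k : Fin 6) :
    pos (flB b 2 1 (by decide), flB b (w1 k) (w2 k) (w_ne k)) = k := by
  classical
  have h : pos (flB b 2 1 (by decide), flB b (w1 k) (w2 k) (w_ne k)) =
      posAux ((2 : Fin 3) = w1 k) ((((2:Fin 3) = w1 k ∨ (2:Fin 3) = w2 k) ∧ ((1:Fin 3) = w1 k ∨ (1:Fin 3) = w2 k)) ∧ ((w1 k = 2 ∨ w1 k = 1) ∧ (w2 k = 2 ∨ w2 k = 1)))
        ((2:Fin 3) = w1 k ∨ (2:Fin 3) = w2 k) (w1 k = 2 ∨ w1 k = 1) := by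
    refine posAux_congr ?_ ?_ ?_ ?_
    · exact span_single_eq_iff b
    · exact span_pair_eq_iff b
    · exact span_single_le_pair_iff b
    · exact span_single_le_pair_iff b
  rw [h]
  fin_cases k <;> simp (config := { decide := true }) [posAux, w1, w2]

theorem smul_fst (g : Matrix.SpecialLinearGroup (Fin 3) F) (V : CompleteFlag F) :
    (g • V).1.1 = V.1.1.map (Matrix.SpecialLinearGroup.toLin' g).toLinearMap := rfl

theorem smul_snd (g : Matrix.SpecialLinearGroup (Fin 3) F) (V : CompleteFlag F) :
    (g • V).1.2 = V.1.2.map (Matrix.SpecialLinearGroup.toLin' g).toLinearMap := rfl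

theorem pos_smul (g : Matrix.SpecialLinearGroup (Fin 3) F) (p : CompleteFlag F × CompleteFlag F) :
    pos (g • p) = pos p := by
  classical
  have hinj : Function.Injective (Matrix.SpecialLinearGroup.toLin' g).toLinearMap :=
    (Matrix.SpecialLinearGroup.toLin' g).injective
  have h1 : (g • p).1 = g • p.1 := rfl
  have h2 : (g • p).2 = g • p.2 := rfl
  unfold pos
  rw [h1, h2, smul_fst, smul_snd, smul_fst, smul_snd]
  refine posAux_congr ?_ ?_ ?_ ?_
  · exact (Submodule.map_injective_of_injective hinj).eq_iff
  · exact (Submodule.map_injective_of_injective hinj).eq_iff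
  · exact Submodule.map_le_map_iff_of_injective hinj _ _
  · exact Submodule.map_le_map_iff_of_injective hinj _ _

open Matrix in
/-- Given two bases of `F³` there is an element of `SL(3,F)` carrying the lines/planes
spanned by the first to those spanned by the second. -/
theorem exists_sl3 (b b' : Basis (Fin 3) F (Fin 3 → F)) :
    ∃ (g : Matrix.SpecialLinearGroup (Fin 3) F) (c : Fin 3 → F),
      (∀ i, c i ≠ 0) ∧ ∀ i, Matrix.SpecialLinearGroup.toLin' g (b i) = c i • b' i := by
  classical
  set e : Basis (Fin 3) F (Fin 3 → F) := Pi.basisFun F (Fin 3)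
  set B : Matrix (Fin 3) (Fin 3) F := e.toMatrix ⇑b with hB
  set B' : Matrix (Fin 3) (Fin 3) F := e.toMatrix ⇑b' with hB'
  have hBinv : Invertible B := e.invertibleToMatrix b
  have hB'inv : Invertible B' := e.invertibleToMatrix b'
  have hdB : IsUnit B.det := B.isUnit_det_of_invertible
  have hdB' : IsUnit B'.det := B'.isUnit_det_of_invertible
  set t : F := B.det * B'.det⁻¹ with ht
  have htne : t ≠ 0 := mul_ne_zero hdB.ne_zero (inv_ne_zero hdB'.ne_zero)
  set D : Matrix (Fin 3) (Fin 3) F := Matrix.diagonal ![1, 1, t] with hD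
  set M : Matrix (Fin 3) (Fin 3) F := B' * D * B⁻¹ with hM
  have hdet : M.det = 1 := by
    rw [hM, Matrix.det_mul, Matrix.det_mul, Matrix.det_nonsing_inv, Matrix.det_diagonal]
    rw [Fin.prod_univ_three]
    simp only [Matrix.cons_val_zero, Matrix.cons_val_one, Matrix.head_cons]
    rw [Ring.inverse_eq_inv']
    rw [ht]
    field_simp
    show B'.det * (B.det / B'.det) / B.det = 1
    rw [mul_div_assoc', mul_div_cancel_left₀ _ hdB'.ne_zero, div_self hdB.ne_zero]
  refine ⟨⟨M, hdet⟩, ![1, 1, t], ?_, ?_⟩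
  · intro i; fin_cases i <;> simp [htne]
  · intro i
    have hcol : ∀ j, B.mulVec (Pi.single j 1) = b j := by
      intro j
      funext x
      rw [Matrix.mulVec_single]
      simp [hB, Basis.toMatrix_apply, e]
    have hcol' : ∀ j, B'.mulVec (Pi.single j (![1,1,t] j)) = (![1,1,t] j) • b' j := by
      intro j
      funext x
      rw [Matrix.mulVec_single]
      simp [hB', Basis.toMatrix_apply, e, mul_comm]
    have htl : Matrix.SpecialLinearGroup.toLin' (⟨M, hdet⟩ : Matrix.SpecialLinearGroup (Fin 3) F) (b i)
        = M.mulVec (b i) := rfl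
    have hBi : B⁻¹.mulVec (b i) = Pi.single i 1 := by
      rw [← hcol i, Matrix.mulVec_mulVec, Matrix.nonsing_inv_mul B hdB, Matrix.one_mulVec]
    calc Matrix.SpecialLinearGroup.toLin' (⟨M, hdet⟩ : Matrix.SpecialLinearGroup (Fin 3) F) (b i)
        = B'.mulVec (D.mulVec (B⁻¹.mulVec (b i))) := by
          rw [htl, hM, Matrix.mulVec_mulVec, Matrix.mulVec_mulVec]
      _ = B'.mulVec (Pi.single i (![1,1,t] i * 1)) := by rw [hBi, hD, Matrix.diagonal_mulVec_single]
      _ = ![1,1,t] i • b' i := by rw [mul_one, hcol' i]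

theorem line_eq {V : Submodule F (Fin 3 → F)} (hV : finrank F V = 1) {v : Fin 3 → F}
    (hv : v ∈ V) (h0 : v ≠ 0) : V = span F {v} := by
  have hle : span F {v} ≤ V := by rwa [span_singleton_le_iff_mem]
  refine (Submodule.eq_of_le_of_finrank_le hle ?_).symm
  rw [hV, finrank_span_singleton h0]

theorem plane_eq {V : Submodule F (Fin 3 → F)} (hV : finrank F V = 2) {x y : Fin 3 → F}
    (hx : x ∈ V) (hy : y ∈ V) (hli : LinearIndependent F ![x, y]) :
    V = span F ({x, y} : Set (Fin 3 → F)) := by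
  have hle : span F ({x, y} : Set (Fin 3 → F)) ≤ V := span_pair_le_iff.2 ⟨hx, hy⟩
  refine (Submodule.eq_of_le_of_finrank_le hle ?_).symm
  rw [hV, finrank_span_pair hli]

theorem li_pair {y z : Fin 3 → F} (hz : z ≠ 0) (hy : y ∉ span F ({z} : Set (Fin 3 → F))) :
    LinearIndependent F ![y, z] := by
  rw [linearIndependent_fin2]
  refine ⟨hz, fun a ha => hy ?_⟩
  rw [Submodule.mem_span_singleton]
  exact ⟨a, ha⟩

theorem li_triple {x y z : Fin 3 → F} (hz : z ≠ 0) (hy : y ∉ span F ({z} : Set (Fin 3 → F)))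
    (hx : x ∉ span F ({y, z} : Set (Fin 3 → F))) : LinearIndependent F ![x, y, z] := by
  have h2 : LinearIndependent F ![y, z] := li_pair hz hy
  have hr : Submodule.span F (Set.range ![y, z]) = span F ({y, z} : Set (Fin 3 → F)) := by
    congr 1
    simp [Matrix.range_cons, Matrix.range_empty, Set.pair_comm]
  have : LinearIndependent F (Fin.cons x ![y, z] : Fin 3 → (Fin 3 → F)) :=
    linearIndependent_fin_cons.2 ⟨h2, by rw [hr]; exact hx⟩
  exact this

noncomputable def mkB {x y z : Fin 3 → F} (h : LinearIndependent F ![x, y, z]) :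
    Basis (Fin 3) F (Fin 3 → F) :=
  basisOfLinearIndependentOfCardEqFinrank h (by simp)

theorem mkB_0 {x y z : Fin 3 → F} (h : LinearIndependent F ![x, y, z]) : mkB h 0 = x := by
  rw [mkB, coe_basisOfLinearIndependentOfCardEqFinrank]; rfl
theorem mkB_1 {x y z : Fin 3 → F} (h : LinearIndependent F ![x, y, z]) : mkB h 1 = y := by
  rw [mkB, coe_basisOfLinearIndependentOfCardEqFinrank]; rfl
theorem mkB_2 {x y z : Fin 3 → F} (h : LinearIndependent F ![x, y, z]) : mkB h 2 = z := by
  rw [mkB, coe_basisOfLinearIndependentOfCardEqFinrank]; rfl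

theorem lines_not_le {V W : Submodule F (Fin 3 → F)} (h1 : finrank F V = 1)
    (h2 : finrank F W = 1) (hne : V ≠ W) : ¬ V ≤ W :=
  fun h => hne (Submodule.eq_of_le_of_finrank_le h (by rw [h1, h2]))

theorem planes_not_le {V W : Submodule F (Fin 3 → F)} (h1 : finrank F V = 2)
    (h2 : finrank F W = 2) (hne : V ≠ W) : ¬ V ≤ W :=
  fun h => hne (Submodule.eq_of_le_of_finrank_le h (by rw [h1, h2]))

theorem planes_inf_ne_bot {V W : Submodule F (Fin 3 → F)} (h1 : finrank F V = 2)
    (h2 : finrank F W = 2) : V ⊓ W ≠ ⊥ := by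
  intro h
  have hs := Submodule.finrank_sup_add_finrank_inf_eq V W
  rw [h, finrank_bot, h1, h2] at hs
  have : finrank F ↥(V ⊔ W) ≤ 3 := by
    have := Submodule.finrank_le (V ⊔ W)
    rwa [Module.finrank_fin_fun] at this
  omega

theorem lines_inf_eq_bot {V W : Submodule F (Fin 3 → F)} (h1 : finrank F V = 1)
    (h2 : finrank F W = 1) (hne : V ≠ W) : V ⊓ W = ⊥ := by
  by_contra h
  obtain ⟨v, hv, hv0⟩ := Submodule.exists_mem_ne_zero_of_ne_bot h
  have e1 : V = span F {v} := line_eq h1 hv.1 hv0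
  have e2 : W = span F {v} := line_eq h2 hv.2 hv0
  exact hne (e1.trans e2.symm)

theorem plane_eq_sup_lines {V W U : Submodule F (Fin 3 → F)} (h1 : finrank F V = 1)
    (h2 : finrank F W = 1) (hne : V ≠ W) (hVU : V ≤ U) (hWU : W ≤ U)
    (hU : finrank F U = 2) : U = V ⊔ W := by
  have hs := Submodule.finrank_sup_add_finrank_inf_eq V W
  rw [lines_inf_eq_bot h1 h2 hne, finrank_bot, h1, h2] at hs
  refine (Submodule.eq_of_le_of_finrank_le (sup_le hVU hWU) ?_).symm
  omega

theorem planes_eq_of_lines {V W U U' : Submodule F (Fin 3 → F)} (h1 : finrank F V = 1)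
    (h2 : finrank F W = 1) (hne : V ≠ W) (hU : finrank F U = 2) (hU' : finrank F U' = 2)
    (hVU : V ≤ U) (hWU : W ≤ U) (hVU' : V ≤ U') (hWU' : W ≤ U') : U = U' :=
  (plane_eq_sup_lines h1 h2 hne hVU hWU hU).trans (plane_eq_sup_lines h1 h2 hne hVU' hWU' hU').symm

theorem not_le_of_finrank' {A B : Submodule F (Fin 3 → F)} {a c : ℕ} (hA : finrank F A = a)
    (hB : finrank F B = c) (h : c < a) : ¬ A ≤ B := fun hle => by
  have := Submodule.finrank_mono (M := Fin 3 → F) hle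
  omega

theorem exists_not_mem_of_finrank {B : Submodule F (Fin 3 → F)} {c : ℕ}
    (hB : finrank F B = c) (h : c < 3) : ∃ x, x ∉ B := by
  have : ¬ (⊤ : Submodule F (Fin 3 → F)) ≤ B := by
    refine not_le_of_finrank' ?_ hB h
    rw [finrank_top, Module.finrank_fin_fun]
  obtain ⟨x, -, hx⟩ := SetLike.not_le_iff_exists.1 this
  exact ⟨x, hx⟩

theorem exists_adapted (p : CompleteFlag F × CompleteFlag F) :
    ∃ b : Basis (Fin 3) F (Fin 3 → F),
      (p.1.1.1 = span F {b 2} ∧ p.1.1.2 = span F ({b 2, b 1} : Set (Fin 3 → F))) ∧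
      (p.2.1.1 = span F {b (w1 (pos p))} ∧
        p.2.1.2 = span F ({b (w1 (pos p)), b (w2 (pos p))} : Set (Fin 3 → F))) := by
  classical
  obtain ⟨V, W⟩ := p
  obtain ⟨hV1, hV2, hV12⟩ := V.2
  obtain ⟨hW1, hW2, hW12⟩ := W.2
  -- pick a generator of V₁
  have hV1bot : V.1.1 ≠ ⊥ := fun h => by rw [h, finrank_bot] at hV1; omega
  obtain ⟨z, hzV1, hz0⟩ := Submodule.exists_mem_ne_zero_of_ne_bot hV1bot
  have eV1 : V.1.1 = span F {z} := line_eq hV1 hzV1 hz0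
  have hzV2 : z ∈ V.1.2 := hV12 hzV1
  by_cases hb : V.1.2 = W.1.2
  · by_cases ha : V.1.1 = W.1.1
    · -- k = 0
      have hpos : pos (V, W) = 0 := by simp [pos, posAux, ha, hb]
      rw [hpos]
      simp only [show w1 (0 : Fin 6) = 2 from by decide, show w2 (0 : Fin 6) = 1 from by decide]
      obtain ⟨y, hyV2, hyV1⟩ := SetLike.not_le_iff_exists.1 (not_le_of_finrank' hV2 hV1 (by omega))
      have eV2 : V.1.2 = span F ({y, z} : Set (Fin 3 → F)) :=
        plane_eq hV2 hyV2 hzV2 (li_pair hz0 (eV1 ▸ hyV1))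
      obtain ⟨x, hxV2⟩ := exists_not_mem_of_finrank hV2 (by omega)
      have hli : LinearIndependent F ![x, y, z] :=
        li_triple hz0 (eV1 ▸ hyV1) (eV2 ▸ hxV2)
      set b := mkB hli with hbdef
      have hb0 : b 0 = x := mkB_0 hli
      have hb1 : b 1 = y := mkB_1 hli
      have hb2 : b 2 = z := mkB_2 hli
      have e2 : V.1.2 = span F ({b 2, b 1} : Set (Fin 3 → F)) :=
        plane_eq hV2 (by rw [hb2]; exact hzV2) (by rw [hb1]; exact hyV2)
          (li_pair_of_li b.linearIndependent (by decide))
      exact ⟨b, ⟨by rw [hb2]; exact eV1, e2⟩, by rw [hb2, ← ha]; exact eV1, by rw [← hb]; exact e2⟩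
    · -- k = 1
      have hpos : pos (V, W) = 1 := by simp [pos, posAux, ha, hb]
      rw [hpos]
      simp only [show w1 (1 : Fin 6) = 1 from by decide, show w2 (1 : Fin 6) = 2 from by decide]
      obtain ⟨y, hyW1, hyV1⟩ :=
        SetLike.not_le_iff_exists.1 (lines_not_le hW1 hV1 (Ne.symm ha))
      have hy0 : y ≠ 0 := fun h => hyV1 (h ▸ V.1.1.zero_mem)
      have eW1 : W.1.1 = span F {y} := line_eq hW1 hyW1 hy0
      have hyV2 : y ∈ V.1.2 := by rw [hb]; exact hW12 hyW1
      have eV2 : V.1.2 = span F ({y, z} : Set (Fin 3 → F)) :=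
        plane_eq hV2 hyV2 hzV2 (li_pair hz0 (eV1 ▸ hyV1))
      obtain ⟨x, hxV2⟩ := exists_not_mem_of_finrank hV2 (by omega)
      have hli : LinearIndependent F ![x, y, z] :=
        li_triple hz0 (eV1 ▸ hyV1) (eV2 ▸ hxV2)
      set b := mkB hli with hbdef
      have hb1 : b 1 = y := mkB_1 hli
      have hb2 : b 2 = z := mkB_2 hli
      have e2 : V.1.2 = span F ({b 2, b 1} : Set (Fin 3 → F)) :=
        plane_eq hV2 (by rw [hb2]; exact hzV2) (by rw [hb1]; exact hyV2)
          (li_pair_of_li b.linearIndependent (by decide))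
      refine ⟨b, ⟨by rw [hb2]; exact eV1, e2⟩, by rw [hb1]; exact eW1, ?_⟩
      show W.1.2 = span F ({b 1, b 2} : Set (Fin 3 → F))
      rw [← hb]
      refine plane_eq (hb ▸ hW2) (by rw [hb1]; exact hyV2) (by rw [hb2]; exact hzV2)
        (li_pair_of_li b.linearIndependent (by decide))
  · by_cases ha : V.1.1 = W.1.1
    · -- k = 2
      have hpos : pos (V, W) = 2 := by simp [pos, posAux, ha, hb]
      rw [hpos]
      simp only [show w1 (2 : Fin 6) = 2 from by decide, show w2 (2 : Fin 6) = 0 from by decide]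
      obtain ⟨y, hyV2, hyV1⟩ := SetLike.not_le_iff_exists.1 (not_le_of_finrank' hV2 hV1 (by omega))
      have eV2 : V.1.2 = span F ({y, z} : Set (Fin 3 → F)) :=
        plane_eq hV2 hyV2 hzV2 (li_pair hz0 (eV1 ▸ hyV1))
      obtain ⟨x, hxW2, hxV2⟩ :=
        SetLike.not_le_iff_exists.1 (planes_not_le hW2 hV2 (Ne.symm hb))
      have hli : LinearIndependent F ![x, y, z] :=
        li_triple hz0 (eV1 ▸ hyV1) (eV2 ▸ hxV2)
      set b := mkB hli with hbdef
      have hb0 : b 0 = x := mkB_0 hli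
      have hb1 : b 1 = y := mkB_1 hli
      have hb2 : b 2 = z := mkB_2 hli
      have hzW2 : z ∈ W.1.2 := hW12 (ha ▸ hzV1)
      have e2 : V.1.2 = span F ({b 2, b 1} : Set (Fin 3 → F)) :=
        plane_eq hV2 (by rw [hb2]; exact hzV2) (by rw [hb1]; exact hyV2)
          (li_pair_of_li b.linearIndependent (by decide))
      refine ⟨b, ⟨by rw [hb2]; exact eV1, e2⟩, by rw [hb2, ← ha]; exact eV1, ?_⟩
      show W.1.2 = span F ({b 2, b 0} : Set (Fin 3 → F))
      exact plane_eq hW2 (by rw [hb2]; exact hzW2) (by rw [hb0]; exact hxW2)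
        (li_pair_of_li b.linearIndependent (by decide))
    · by_cases hc : V.1.1 ≤ W.1.2
      · -- k = 3
        have hpos : pos (V, W) = 3 := by simp [pos, posAux, ha, hb, hc]
        rw [hpos]
        simp only [show w1 (3 : Fin 6) = 0 from by decide, show w2 (3 : Fin 6) = 2 from by decide]
        have hd : ¬ W.1.1 ≤ V.1.2 := by
          intro hd
          exact hb (planes_eq_of_lines hV1 hW1 ha hV2 hW2 hV12 hd hc hW12)
        obtain ⟨x, hxW1, hxV2⟩ := SetLike.not_le_iff_exists.1 hd
        have hx0 : x ≠ 0 := fun h => hxV2 (h ▸ V.1.2.zero_mem)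
        have eW1 : W.1.1 = span F {x} := line_eq hW1 hxW1 hx0
        obtain ⟨y, hyV2, hyV1⟩ :=
          SetLike.not_le_iff_exists.1 (not_le_of_finrank' hV2 hV1 (by omega))
        have eV2 : V.1.2 = span F ({y, z} : Set (Fin 3 → F)) :=
          plane_eq hV2 hyV2 hzV2 (li_pair hz0 (eV1 ▸ hyV1))
        have hli : LinearIndependent F ![x, y, z] :=
          li_triple hz0 (eV1 ▸ hyV1) (eV2 ▸ hxV2)
        set b := mkB hli with hbdef
        have hb0 : b 0 = x := mkB_0 hli
        have hb1 : b 1 = y := mkB_1 hli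
        have hb2 : b 2 = z := mkB_2 hli
        have e2 : V.1.2 = span F ({b 2, b 1} : Set (Fin 3 → F)) :=
          plane_eq hV2 (by rw [hb2]; exact hzV2) (by rw [hb1]; exact hyV2)
            (li_pair_of_li b.linearIndependent (by decide))
        refine ⟨b, ⟨by rw [hb2]; exact eV1, e2⟩, by rw [hb0]; exact eW1, ?_⟩
        show W.1.2 = span F ({b 0, b 2} : Set (Fin 3 → F))
        exact plane_eq hW2 (by rw [hb0]; exact hW12 hxW1) (by rw [hb2]; exact hc hzV1)
          (li_pair_of_li b.linearIndependent (by decide))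
      · by_cases hd : W.1.1 ≤ V.1.2
        · -- k = 4
          have hpos : pos (V, W) = 4 := by simp [pos, posAux, ha, hb, hc, hd]
          rw [hpos]
          simp only [show w1 (4 : Fin 6) = 1 from by decide, show w2 (4 : Fin 6) = 0 from by decide]
          obtain ⟨y, hyW1, hyV1⟩ :=
            SetLike.not_le_iff_exists.1 (lines_not_le hW1 hV1 (Ne.symm ha))
          have hy0 : y ≠ 0 := fun h => hyV1 (h ▸ V.1.1.zero_mem)
          have eW1 : W.1.1 = span F {y} := line_eq hW1 hyW1 hy0
          have hyV2 : y ∈ V.1.2 := hd hyW1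
          have eV2 : V.1.2 = span F ({y, z} : Set (Fin 3 → F)) :=
            plane_eq hV2 hyV2 hzV2 (li_pair hz0 (eV1 ▸ hyV1))
          obtain ⟨x, hxW2, hxV2⟩ :=
            SetLike.not_le_iff_exists.1 (planes_not_le hW2 hV2 (Ne.symm hb))
          have hli : LinearIndependent F ![x, y, z] :=
            li_triple hz0 (eV1 ▸ hyV1) (eV2 ▸ hxV2)
          set b := mkB hli with hbdef
          have hb0 : b 0 = x := mkB_0 hli
          have hb1 : b 1 = y := mkB_1 hli
          have hb2 : b 2 = z := mkB_2 hli
          have e2 : V.1.2 = span F ({b 2, b 1} : Set (Fin 3 → F)) :=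
            plane_eq hV2 (by rw [hb2]; exact hzV2) (by rw [hb1]; exact hyV2)
              (li_pair_of_li b.linearIndependent (by decide))
          refine ⟨b, ⟨by rw [hb2]; exact eV1, e2⟩, by rw [hb1]; exact eW1, ?_⟩
          show W.1.2 = span F ({b 1, b 0} : Set (Fin 3 → F))
          exact plane_eq hW2 (by rw [hb1]; exact hW12 hyW1) (by rw [hb0]; exact hxW2)
            (li_pair_of_li b.linearIndependent (by decide))
        · -- k = 5
          have hpos : pos (V, W) = 5 := by simp [pos, posAux, ha, hb, hc, hd]
          rw [hpos]
          simp only [show w1 (5 : Fin 6) = 0 from by decide, show w2 (5 : Fin 6) = 1 from by decide]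
          obtain ⟨y, hyI, hy0⟩ := Submodule.exists_mem_ne_zero_of_ne_bot
            (planes_inf_ne_bot hV2 hW2 : V.1.2 ⊓ W.1.2 ≠ ⊥)
          have hyV2 : y ∈ V.1.2 := hyI.1
          have hyW2 : y ∈ W.1.2 := hyI.2
          have hyV1 : y ∉ V.1.1 := by
            intro hmem
            exact hc (by rw [line_eq hV1 hmem hy0]; exact (span_singleton_le_iff_mem _ _).2 hyW2)
          have eV2 : V.1.2 = span F ({y, z} : Set (Fin 3 → F)) :=
            plane_eq hV2 hyV2 hzV2 (li_pair hz0 (eV1 ▸ hyV1))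
          obtain ⟨x, hxW1, hxV2⟩ := SetLike.not_le_iff_exists.1 hd
          have hx0 : x ≠ 0 := fun h => hxV2 (h ▸ V.1.2.zero_mem)
          have eW1 : W.1.1 = span F {x} := line_eq hW1 hxW1 hx0
          have hli : LinearIndependent F ![x, y, z] :=
            li_triple hz0 (eV1 ▸ hyV1) (eV2 ▸ hxV2)
          set b := mkB hli with hbdef
          have hb0 : b 0 = x := mkB_0 hli
          have hb1 : b 1 = y := mkB_1 hli
          have hb2 : b 2 = z := mkB_2 hli
          have e2 : V.1.2 = span F ({b 2, b 1} : Set (Fin 3 → F)) :=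
            plane_eq hV2 (by rw [hb2]; exact hzV2) (by rw [hb1]; exact hyV2)
              (li_pair_of_li b.linearIndependent (by decide))
          refine ⟨b, ⟨by rw [hb2]; exact eV1, e2⟩, by rw [hb0]; exact eW1, ?_⟩
          show W.1.2 = span F ({b 0, b 1} : Set (Fin 3 → F))
          exact plane_eq hW2 (by rw [hb0]; exact hW12 hxW1) (by rw [hb1]; exact hyW2)
            (li_pair_of_li b.linearIndependent (by decide))

theorem map_span_single (g : Matrix.SpecialLinearGroup (Fin 3) F) (x : Fin 3 → F) :
    Submodule.map (Matrix.SpecialLinearGroup.toLin' g).toLinearMap (span F ({x} : Set (Fin 3 → F)))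
      = span F ({Matrix.SpecialLinearGroup.toLin' g x} : Set (Fin 3 → F)) := by
  rw [Submodule.map_span, Set.image_singleton]; rfl

theorem map_span_pair (g : Matrix.SpecialLinearGroup (Fin 3) F) (x y : Fin 3 → F) :
    Submodule.map (Matrix.SpecialLinearGroup.toLin' g).toLinearMap
        (span F ({x, y} : Set (Fin 3 → F)))
      = span F ({Matrix.SpecialLinearGroup.toLin' g x, Matrix.SpecialLinearGroup.toLin' g y} :
          Set (Fin 3 → F)) := by
  rw [Submodule.map_span, Set.image_pair]; rfl

theorem span_pair_smul {c d : F} (hc : c ≠ 0) (hd : d ≠ 0) (x y : Fin 3 → F) :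
    span F ({c • x, d • y} : Set (Fin 3 → F)) = span F ({x, y} : Set (Fin 3 → F)) := by
  rw [show ({c • x, d • y} : Set (Fin 3 → F)) = insert (c • x) {d • y} from rfl,
    Submodule.span_insert, show ({x, y} : Set (Fin 3 → F)) = insert x {y} from rfl,
    Submodule.span_insert,
    Submodule.span_singleton_smul_eq (isUnit_iff_ne_zero.2 hc),
    Submodule.span_singleton_smul_eq (isUnit_iff_ne_zero.2 hd)]

theorem exists_smul_eq_of_pos_eq {p q : CompleteFlag F × CompleteFlag F} (h : pos p = pos q) :
    ∃ g : Matrix.SpecialLinearGroup (Fin 3) F, g • p = q := by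
  obtain ⟨b, ⟨e1, e2⟩, e3, e4⟩ := exists_adapted p
  obtain ⟨b', ⟨f1, f2⟩, f3, f4⟩ := exists_adapted q
  rw [← h] at f3 f4
  obtain ⟨g, c, hc0, hg⟩ := exists_sl3 b b'
  have key : ∀ i : Fin 3,
      Submodule.map (Matrix.SpecialLinearGroup.toLin' g).toLinearMap
        (span F ({b i} : Set (Fin 3 → F))) = span F ({b' i} : Set (Fin 3 → F)) := by
    intro i
    rw [map_span_single, hg i, Submodule.span_singleton_smul_eq (isUnit_iff_ne_zero.2 (hc0 i))]
  have key2 : ∀ i j : Fin 3,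
      Submodule.map (Matrix.SpecialLinearGroup.toLin' g).toLinearMap
        (span F ({b i, b j} : Set (Fin 3 → F))) = span F ({b' i, b' j} : Set (Fin 3 → F)) := by
    intro i j
    rw [map_span_pair, hg i, hg j, span_pair_smul (hc0 i) (hc0 j)]
  refine ⟨g, Prod.ext ?_ ?_⟩
  · apply Subtype.ext
    refine Prod.ext ?_ ?_
    · show Submodule.map (Matrix.SpecialLinearGroup.toLin' g).toLinearMap p.1.1.1 = q.1.1.1
      rw [e1, f1, key]
    · show Submodule.map (Matrix.SpecialLinearGroup.toLin' g).toLinearMap p.1.1.2 = q.1.1.2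
      rw [e2, f2, key2]
  · apply Subtype.ext
    refine Prod.ext ?_ ?_
    · show Submodule.map (Matrix.SpecialLinearGroup.toLin' g).toLinearMap p.2.1.1 = q.2.1.1
      rw [e3, f3, key]
    · show Submodule.map (Matrix.SpecialLinearGroup.toLin' g).toLinearMap p.2.1.2 = q.2.1.2
      rw [e4, f4, key2]

theorem card_orbits (F : Type) [Field F] :
    Nat.card (Quotient (MulAction.orbitRel (Matrix.SpecialLinearGroup (Fin 3) F)
      (CompleteFlag F × CompleteFlag F))) = 6 := by
  classical
  have hresp : ∀ (a b : CompleteFlag F × CompleteFlag F),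
      (MulAction.orbitRel (Matrix.SpecialLinearGroup (Fin 3) F)
        (CompleteFlag F × CompleteFlag F)).r a b → pos a = pos b := by
    rintro a b ⟨g, rfl⟩
    exact pos_smul g b
  have hbij : Function.Bijective (Quotient.lift pos hresp) := by
    constructor
    · refine Quotient.ind₂ ?_
      intro p q hpq
      obtain ⟨g, hg⟩ := exists_smul_eq_of_pos_eq (hpq : pos p = pos q)
      refine Quotient.sound ?_
      exact ⟨g⁻¹, by subst hg; show g⁻¹ • g • p = p; rw [inv_smul_smul]⟩
    · intro k
      exact ⟨⟦(flB (Pi.basisFun F (Fin 3)) 2 1 (by decide),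
        flB (Pi.basisFun F (Fin 3)) (w1 k) (w2 k) (w_ne k))⟧, pos_pattern _ k⟩
  rw [Nat.card_congr (Equiv.ofBijective _ hbij)]
  simp

/-- The endomorphism algebra of the permutation representation of `SL(3,F)` on the
complete flags in `F³` (i.e. the `A₂` Iwahori–Hecke algebra) has dimension `6 = |S₃|`
over `ℂ`. -/
theorem finrank_end_flag_rep_eq_six (F : Type) [Field F] [Fintype F] :
    Module.finrank ℂ
      (Rep.ofMulAction ℂ (Matrix.SpecialLinearGroup (Fin 3) F) (CompleteFlag F) ⟶
        Rep.ofMulAction ℂ (Matrix.SpecialLinearGroup (Fin 3) F) (CompleteFlag F)) = 6 := by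
  have hfin : Finite (CompleteFlag F) := by
    have h1 : Finite (Submodule F (Fin 3 → F)) :=
      Finite.of_injective (fun V => (V : Set (Fin 3 → F))) SetLike.coe_injective
    unfold CompleteFlag
    infer_instance
  letI : Fintype (CompleteFlag F) := Fintype.ofFinite _
  rw [finrank_hom_eq_card]
  exact card_orbits F
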